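/- The subspace S = { b ∈ ℝ³ : b₁² + b₂² − b₃² ≠ 0 and b₁² + b₂² − b₃² ≠ 1 } of ℝ³ (with the subspace topology) has exactly four connected components. -/

import Mathlib

open Real Set

namespace Stmt16Aux

/-- polar representation -/
lemma exists_cos_sin (x y : ℝ) (h : 0 < x ^ 2 + y ^ 2) :
    ∃ θ : ℝ, Real.sqrt (x ^ 2 + y ^ 2) * Real.cos θ = x ∧
      Real.sqrt (x ^ 2 + y ^ 2) * Real.sin θ = y := by
  set w : ℂ := ⟨x, y⟩ with hw
  have hns : Complex.normSq w = x ^ 2 + y ^ 2 := by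
    simp [Complex.normSq_mk, hw]; ring
  have hw0 : w ≠ 0 := by
    intro h0
    rw [h0] at hns
    simp at hns
    nlinarith
  have habs : ‖w‖ = Real.sqrt (x ^ 2 + y ^ 2) := by
    rw [Complex.norm_def, hns]
  refine ⟨Complex.arg w, ?_, ?_⟩
  · rw [← habs, Complex.cos_arg hw0]
    rw [mul_div_cancel₀ _ (norm_ne_zero_iff.mpr hw0)]
  · rw [← habs, Complex.sin_arg]
    rw [mul_div_cancel₀ _ (norm_ne_zero_iff.mpr hw0)]

noncomputable section

def fQ (b : Fin 3 → ℝ) : ℝ := b 0 ^ 2 + b 1 ^ 2 - b 2 ^ 2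

lemma contQ : Continuous fQ := by
  unfold fQ; fun_prop

def T0 : Set (Fin 3 → ℝ) := {b | 1 < fQ b}
def T1 : Set (Fin 3 → ℝ) := {b | 0 < fQ b ∧ fQ b < 1}
def T2 : Set (Fin 3 → ℝ) := {b | fQ b < 0 ∧ 0 < b 2}
def T3 : Set (Fin 3 → ℝ) := {b | fQ b < 0 ∧ b 2 < 0}

lemma cont_vec {a b c : (Fin 3 → ℝ) → ℝ} (ha : Continuous a) (hb : Continuous b)
    (hc : Continuous c) : Continuous (fun m => ![a m, b m, c m]) := by
  refine continuous_pi fun i => ?_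
  fin_cases i <;> simpa

lemma open0 : IsOpen T0 := isOpen_lt continuous_const contQ
lemma open1 : IsOpen T1 :=
  (isOpen_lt continuous_const contQ).inter (isOpen_lt contQ continuous_const)
lemma open2 : IsOpen T2 :=
  (isOpen_lt contQ continuous_const).inter (isOpen_lt continuous_const (continuous_apply 2))
lemma open3 : IsOpen T3 :=
  (isOpen_lt contQ continuous_const).inter (isOpen_lt (continuous_apply 2) continuous_const)

/-- parametrization of `T0` -/
def g0 (m : Fin 3 → ℝ) : Fin 3 → ℝ :=
  ![Real.sqrt ((m 1) ^ 2 + 1 + Real.exp (m 2)) * Real.cos (m 0),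
    Real.sqrt ((m 1) ^ 2 + 1 + Real.exp (m 2)) * Real.sin (m 0), m 1]

lemma range_g0 : Set.range g0 = T0 := by
  ext b
  constructor
  · rintro ⟨m, rfl⟩
    have hr : Real.sqrt ((m 1) ^ 2 + 1 + Real.exp (m 2)) ^ 2
        = (m 1) ^ 2 + 1 + Real.exp (m 2) := Real.sq_sqrt (by positivity)
    show 1 < fQ _
    unfold fQ g0
    simp only [Matrix.cons_val_zero, Matrix.cons_val_one, Matrix.head_cons,
      Matrix.cons_val_two, Matrix.tail_cons]
    nlinarith [Real.sin_sq_add_cos_sq (m 0), Real.exp_pos (m 2)]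
  · intro hb
    have hb' : 1 < fQ b := hb
    have hpos : 0 < b 0 ^ 2 + b 1 ^ 2 := by unfold fQ at hb'; nlinarith
    obtain ⟨θ, hc, hs⟩ := exists_cos_sin (b 0) (b 1) hpos
    refine ⟨![θ, b 2, Real.log (fQ b - 1)], ?_⟩
    have he : Real.exp (Real.log (fQ b - 1)) = fQ b - 1 :=
      Real.exp_log (by linarith)
    have harg : (b 2) ^ 2 + 1 + Real.exp (Real.log (fQ b - 1)) = b 0 ^ 2 + b 1 ^ 2 := by
      rw [he]; unfold fQ; ring
    funext i
    fin_cases i <;>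
      simp only [g0, Matrix.cons_val_zero, Matrix.cons_val_one, Matrix.head_cons,
        Matrix.cons_val_two, Matrix.tail_cons, harg] <;>
      first
        | exact hc
        | exact hs
        | rfl

lemma conn0 : IsPreconnected T0 := by
  rw [← range_g0, ← image_univ]
  exact isPreconnected_univ.image _ (by unfold g0; exact
    (cont_vec (by fun_prop) (by fun_prop) (by fun_prop)).continuousOn)

/-- parametrization of `T1` -/
def g1 (m : Fin 3 → ℝ) : Fin 3 → ℝ :=
  ![Real.sqrt ((m 1) ^ 2 + Real.exp (-Real.exp (m 2))) * Real.cos (m 0),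
    Real.sqrt ((m 1) ^ 2 + Real.exp (-Real.exp (m 2))) * Real.sin (m 0), m 1]

lemma range_g1 : Set.range g1 = T1 := by
  ext b
  constructor
  · rintro ⟨m, rfl⟩
    have hr : Real.sqrt ((m 1) ^ 2 + Real.exp (-Real.exp (m 2))) ^ 2
        = (m 1) ^ 2 + Real.exp (-Real.exp (m 2)) := Real.sq_sqrt (by positivity)
    have hlt : Real.exp (-Real.exp (m 2)) < 1 := by
      rw [Real.exp_lt_one_iff]
      exact neg_neg_iff_pos.mpr (Real.exp_pos _)
    refine ⟨?_, ?_⟩ <;>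
    · show _
      unfold fQ g1
      simp only [Matrix.cons_val_zero, Matrix.cons_val_one, Matrix.head_cons,
        Matrix.cons_val_two, Matrix.tail_cons]
      nlinarith [Real.sin_sq_add_cos_sq (m 0), Real.exp_pos (-Real.exp (m 2))]
  · rintro ⟨hb0, hb1⟩
    have hpos : 0 < b 0 ^ 2 + b 1 ^ 2 := by unfold fQ at hb0; nlinarith
    obtain ⟨θ, hc, hs⟩ := exists_cos_sin (b 0) (b 1) hpos
    refine ⟨![θ, b 2, Real.log (-Real.log (fQ b))], ?_⟩
    have hlog : Real.log (fQ b) < 0 := Real.log_neg hb0 hb1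
    have he : Real.exp (Real.log (-Real.log (fQ b))) = -Real.log (fQ b) :=
      Real.exp_log (by linarith)
    have he2 : Real.exp (-(-Real.log (fQ b))) = fQ b := by
      rw [neg_neg]; exact Real.exp_log hb0
    have harg : (b 2) ^ 2 + Real.exp (-Real.exp (Real.log (-Real.log (fQ b))))
        = b 0 ^ 2 + b 1 ^ 2 := by
      rw [he, he2]; unfold fQ; ring
    funext i
    fin_cases i <;>
      simp only [g1, Matrix.cons_val_zero, Matrix.cons_val_one, Matrix.head_cons,
        Matrix.cons_val_two, Matrix.tail_cons, harg] <;>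
      first
        | exact hc
        | exact hs
        | rfl

lemma conn1 : IsPreconnected T1 := by
  rw [← range_g1, ← image_univ]
  exact isPreconnected_univ.image _ (by unfold g1; exact
    (cont_vec (by fun_prop) (by fun_prop) (by fun_prop)).continuousOn)

/-- parametrization of `T2` -/
def g2 (m : Fin 3 → ℝ) : Fin 3 → ℝ :=
  ![m 0, m 1, Real.sqrt ((m 0) ^ 2 + (m 1) ^ 2) + Real.exp (m 2)]

lemma range_g2 : Set.range g2 = T2 := by
  ext b
  constructor
  · rintro ⟨m, rfl⟩
    have hr : Real.sqrt ((m 0) ^ 2 + (m 1) ^ 2) ^ 2 = (m 0) ^ 2 + (m 1) ^ 2 :=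
      Real.sq_sqrt (by positivity)
    have hnn := Real.sqrt_nonneg ((m 0) ^ 2 + (m 1) ^ 2)
    constructor
    · show fQ _ < 0
      unfold fQ g2
      simp only [Matrix.cons_val_zero, Matrix.cons_val_one, Matrix.head_cons,
        Matrix.cons_val_two, Matrix.tail_cons]
      nlinarith [Real.exp_pos (m 2)]
    · show (0:ℝ) < g2 m 2
      unfold g2
      simp only [Matrix.cons_val_two, Matrix.tail_cons, Matrix.head_cons]
      nlinarith [Real.exp_pos (m 2)]
  · rintro ⟨hb0, hb2⟩
    have hr : Real.sqrt ((b 0) ^ 2 + (b 1) ^ 2) ^ 2 = (b 0) ^ 2 + (b 1) ^ 2 :=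
      Real.sq_sqrt (by positivity)
    have hnn := Real.sqrt_nonneg ((b 0) ^ 2 + (b 1) ^ 2)
    have hlt : Real.sqrt ((b 0) ^ 2 + (b 1) ^ 2) < b 2 := by
      unfold fQ at hb0; nlinarith
    refine ⟨![b 0, b 1, Real.log (b 2 - Real.sqrt ((b 0) ^ 2 + (b 1) ^ 2))], ?_⟩
    have he : Real.exp (Real.log (b 2 - Real.sqrt ((b 0) ^ 2 + (b 1) ^ 2)))
        = b 2 - Real.sqrt ((b 0) ^ 2 + (b 1) ^ 2) := Real.exp_log (by linarith)
    funext i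
    fin_cases i
    · rfl
    · rfl
    · show Real.sqrt ((b 0) ^ 2 + (b 1) ^ 2)
          + Real.exp (Real.log (b 2 - Real.sqrt ((b 0) ^ 2 + (b 1) ^ 2))) = b 2
      rw [he]; ring

lemma conn2 : IsPreconnected T2 := by
  rw [← range_g2, ← image_univ]
  exact isPreconnected_univ.image _ (by unfold g2; exact
    (cont_vec (by fun_prop) (by fun_prop) (by fun_prop)).continuousOn)

/-- parametrization of `T3` -/
def g3 (m : Fin 3 → ℝ) : Fin 3 → ℝ :=
  ![m 0, m 1, -(Real.sqrt ((m 0) ^ 2 + (m 1) ^ 2) + Real.exp (m 2))]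

lemma range_g3 : Set.range g3 = T3 := by
  ext b
  constructor
  · rintro ⟨m, rfl⟩
    have hr : Real.sqrt ((m 0) ^ 2 + (m 1) ^ 2) ^ 2 = (m 0) ^ 2 + (m 1) ^ 2 :=
      Real.sq_sqrt (by positivity)
    have hnn := Real.sqrt_nonneg ((m 0) ^ 2 + (m 1) ^ 2)
    constructor
    · show fQ _ < 0
      unfold fQ g3
      simp only [Matrix.cons_val_zero, Matrix.cons_val_one, Matrix.head_cons,
        Matrix.cons_val_two, Matrix.tail_cons]
      nlinarith [Real.exp_pos (m 2)]
    · show g3 m 2 < (0:ℝ)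
      unfold g3
      simp only [Matrix.cons_val_two, Matrix.tail_cons, Matrix.head_cons]
      nlinarith [Real.exp_pos (m 2)]
  · rintro ⟨hb0, hb2⟩
    have hr : Real.sqrt ((b 0) ^ 2 + (b 1) ^ 2) ^ 2 = (b 0) ^ 2 + (b 1) ^ 2 :=
      Real.sq_sqrt (by positivity)
    have hnn := Real.sqrt_nonneg ((b 0) ^ 2 + (b 1) ^ 2)
    have hlt : Real.sqrt ((b 0) ^ 2 + (b 1) ^ 2) < -b 2 := by
      unfold fQ at hb0; nlinarith
    refine ⟨![b 0, b 1, Real.log (-b 2 - Real.sqrt ((b 0) ^ 2 + (b 1) ^ 2))], ?_⟩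
    have he : Real.exp (Real.log (-b 2 - Real.sqrt ((b 0) ^ 2 + (b 1) ^ 2)))
        = -b 2 - Real.sqrt ((b 0) ^ 2 + (b 1) ^ 2) := Real.exp_log (by linarith)
    funext i
    fin_cases i
    · rfl
    · rfl
    · show -(Real.sqrt ((b 0) ^ 2 + (b 1) ^ 2)
          + Real.exp (Real.log (-b 2 - Real.sqrt ((b 0) ^ 2 + (b 1) ^ 2)))) = b 2
      rw [he]; ring

lemma conn3 : IsPreconnected T3 := by
  rw [← range_g3, ← image_univ]
  exact isPreconnected_univ.image _ (by unfold g3; exact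
    (cont_vec (by fun_prop) (by fun_prop) (by fun_prop)).continuousOn)

def Sset : Set (Fin 3 → ℝ) := {b | fQ b ≠ 0 ∧ fQ b ≠ 1}

lemma cover {b : Fin 3 → ℝ} (hb : b ∈ Sset) :
    b ∈ T0 ∨ b ∈ T1 ∨ b ∈ T2 ∨ b ∈ T3 := by
  obtain ⟨h0, h1⟩ := hb
  rcases lt_trichotomy (fQ b) 0 with h | h | h
  · have h2 : b 2 ≠ 0 := by
      intro hz
      have h' := h
      unfold fQ at h'
      rw [hz] at h'
      nlinarith
    rcases h2.lt_or_gt with hz | hz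
    · exact Or.inr (Or.inr (Or.inr ⟨h, hz⟩))
    · exact Or.inr (Or.inr (Or.inl ⟨h, hz⟩))
  · exact absurd h h0
  · rcases lt_trichotomy (fQ b) 1 with h' | h' | h'
    · exact Or.inr (Or.inl ⟨h, h'⟩)
    · exact absurd h' h1
    · exact Or.inl h'

lemma sub0 : T0 ⊆ Sset := fun b hb => by
  have : 1 < fQ b := hb; exact ⟨by linarith, by linarith⟩
lemma sub1 : T1 ⊆ Sset := fun b hb => ⟨by have := hb.1; linarith, by have := hb.2; linarith⟩
lemma sub2 : T2 ⊆ Sset := fun b hb => ⟨by have := hb.1; linarith, by have := hb.1; linarith⟩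
lemma sub3 : T3 ⊆ Sset := fun b hb => ⟨by have := hb.1; linarith, by have := hb.1; linarith⟩

lemma hd0 {b : Fin 3 → ℝ} (hb : b ∈ Sset) : b ∈ T0 ↔ b ∉ (T1 ∪ T2 ∪ T3) := by
  constructor
  · intro h hmem
    have h' : 1 < fQ b := h
    rcases hmem with (h'' | h'') | h'' <;>
      [ (exact absurd h''.2 (by linarith));
        (exact absurd h''.1 (by linarith));
        (exact absurd h''.1 (by linarith)) ]
  · intro h
    rcases cover hb with h0 | h0 | h0 | h0
    · exact h0
    · exact absurd (Or.inl (Or.inl h0)) h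
    · exact absurd (Or.inl (Or.inr h0)) h
    · exact absurd (Or.inr h0) h

lemma hd1 {b : Fin 3 → ℝ} (hb : b ∈ Sset) : b ∈ T1 ↔ b ∉ (T0 ∪ T2 ∪ T3) := by
  constructor
  · intro h hmem
    rcases hmem with (h'' | h'') | h''
    · have h2 : 1 < fQ b := h''
      exact absurd h.2 (by linarith)
    · exact absurd h.1 (by have := h''.1; linarith)
    · exact absurd h.1 (by have := h''.1; linarith)
  · intro h
    rcases cover hb with h0 | h0 | h0 | h0
    · exact absurd (Or.inl (Or.inl h0)) h
    · exact h0
    · exact absurd (Or.inl (Or.inr h0)) h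
    · exact absurd (Or.inr h0) h

lemma hd2 {b : Fin 3 → ℝ} (hb : b ∈ Sset) : b ∈ T2 ↔ b ∉ (T0 ∪ T1 ∪ T3) := by
  constructor
  · intro h hmem
    rcases hmem with (h'' | h'') | h''
    · have h2 : 1 < fQ b := h''
      exact absurd h.1 (by linarith)
    · exact absurd h.1 (by have := h''.1; linarith)
    · exact absurd h.2 (by have := h''.2; linarith)
  · intro h
    rcases cover hb with h0 | h0 | h0 | h0
    · exact absurd (Or.inl (Or.inl h0)) h
    · exact absurd (Or.inl (Or.inr h0)) h
    · exact h0
    · exact absurd (Or.inr h0) h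

lemma hd3 {b : Fin 3 → ℝ} (hb : b ∈ Sset) : b ∈ T3 ↔ b ∉ (T0 ∪ T1 ∪ T2) := by
  constructor
  · intro h hmem
    rcases hmem with (h'' | h'') | h''
    · have h2 : 1 < fQ b := h''
      exact absurd h.1 (by linarith)
    · exact absurd h.1 (by have := h''.1; linarith)
    · exact absurd h.2 (by have := h''.2; linarith)
  · intro h
    rcases cover hb with h0 | h0 | h0 | h0
    · exact absurd (Or.inl (Or.inl h0)) h
    · exact absurd (Or.inl (Or.inr h0)) h
    · exact absurd (Or.inr h0) h
    · exact h0

/-- key: the connected component of a point of a clopen-cut piece is that piece. -/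
lemma comp_eq {T R : Set (Fin 3 → ℝ)} (hT : IsPreconnected T) (hTo : IsOpen T)
    (hR : IsOpen R) (hsub : T ⊆ Sset) (hd : ∀ b ∈ Sset, b ∈ T ↔ b ∉ R)
    {x : ↥Sset} (hx : (x : Fin 3 → ℝ) ∈ T) :
    connectedComponent x = Subtype.val ⁻¹' T := by
  have hopen : IsOpen (Subtype.val ⁻¹' T : Set ↥Sset) :=
    hTo.preimage continuous_subtype_val
  have hclosed : IsClosed (Subtype.val ⁻¹' T : Set ↥Sset) := by
    rw [← isOpen_compl_iff]
    have hcompl : (Subtype.val ⁻¹' T : Set ↥Sset)ᶜ = Subtype.val ⁻¹' R := by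
      ext y
      simp only [mem_compl_iff, mem_preimage]
      rw [hd y y.2]
      tauto
    rw [hcompl]
    exact hR.preimage continuous_subtype_val
  have hpre : IsPreconnected (Subtype.val ⁻¹' T : Set ↥Sset) := by
    have h1 : Subtype.val '' (Subtype.val ⁻¹' T : Set ↥Sset) = T := by
      rw [Subtype.image_preimage_coe, inter_eq_right.mpr hsub]
    exact (Topology.IsInducing.subtypeVal).isPreconnected_image.mp (by rw [h1]; exact hT)
  exact subset_antisymm
    ((IsClopen.connectedComponent_subset ⟨hclosed, hopen⟩ hx))
    (hpre.subset_connectedComponent hx)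

lemma cc0 {x : ↥Sset} (hx : (x : Fin 3 → ℝ) ∈ T0) :
    connectedComponent x = Subtype.val ⁻¹' T0 :=
  comp_eq conn0 open0 ((open1.union open2).union open3) sub0 (fun _ hb => hd0 hb) hx
lemma cc1 {x : ↥Sset} (hx : (x : Fin 3 → ℝ) ∈ T1) :
    connectedComponent x = Subtype.val ⁻¹' T1 :=
  comp_eq conn1 open1 ((open0.union open2).union open3) sub1 (fun _ hb => hd1 hb) hx
lemma cc2 {x : ↥Sset} (hx : (x : Fin 3 → ℝ) ∈ T2) :
    connectedComponent x = Subtype.val ⁻¹' T2 :=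
  comp_eq conn2 open2 ((open0.union open1).union open3) sub2 (fun _ hb => hd2 hb) hx
lemma cc3 {x : ↥Sset} (hx : (x : Fin 3 → ℝ) ∈ T3) :
    connectedComponent x = Subtype.val ⁻¹' T3 :=
  comp_eq conn3 open3 ((open0.union open1).union open2) sub3 (fun _ hb => hd3 hb) hx

def q0 : ↥Sset := ⟨![2, 0, 0], by constructor <;> (show ¬ _ = _ ; norm_num [fQ, Matrix.cons_val_two, Matrix.tail_cons, Matrix.head_cons])⟩
def q1 : ↥Sset := ⟨![1/2, 0, 0], by constructor <;> (show ¬ _ = _ ; norm_num [fQ, Matrix.cons_val_two, Matrix.tail_cons, Matrix.head_cons])⟩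
def q2 : ↥Sset := ⟨![0, 0, 1], by constructor <;> (show ¬ _ = _ ; norm_num [fQ, Matrix.cons_val_two, Matrix.tail_cons, Matrix.head_cons])⟩
def q3 : ↥Sset := ⟨![0, 0, -1], by constructor <;> (show ¬ _ = _ ; norm_num [fQ, Matrix.cons_val_two, Matrix.tail_cons, Matrix.head_cons])⟩

lemma q0mem : (q0 : Fin 3 → ℝ) ∈ T0 := by show (1:ℝ) < _; norm_num [fQ, q0, Matrix.cons_val_two, Matrix.tail_cons, Matrix.head_cons]
lemma q1mem : (q1 : Fin 3 → ℝ) ∈ T1 := by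
  constructor <;> norm_num [fQ, q1, Matrix.cons_val_two, Matrix.tail_cons, Matrix.head_cons]
lemma q2mem : (q2 : Fin 3 → ℝ) ∈ T2 := by
  constructor <;> norm_num [fQ, q2, Matrix.cons_val_two, Matrix.tail_cons, Matrix.head_cons]
lemma q3mem : (q3 : Fin 3 → ℝ) ∈ T3 := by
  constructor <;> norm_num [fQ, q3, Matrix.cons_val_two, Matrix.tail_cons, Matrix.head_cons]

lemma coe_ne {x y : ↥Sset} {Tx Ty : Set (Fin 3 → ℝ)}
    (hccx : connectedComponent x = Subtype.val ⁻¹' Tx)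
    (hccy : connectedComponent y = Subtype.val ⁻¹' Ty)
    (hy : (y : Fin 3 → ℝ) ∈ Ty) (hne : (y : Fin 3 → ℝ) ∉ Tx) :
    (x : ConnectedComponents ↥Sset) ≠ y := by
  intro h
  rw [ConnectedComponents.coe_eq_coe, hccx, hccy] at h
  have hmem : y ∈ (Subtype.val ⁻¹' Tx : Set ↥Sset) := by rw [h]; exact hy
  exact hne hmem

lemma ne01 : (q0 : ConnectedComponents ↥Sset) ≠ q1 :=
  coe_ne (cc0 q0mem) (cc1 q1mem) q1mem
    (by simp only [T0, fQ, q1, mem_setOf_eq]; norm_num [Matrix.cons_val_two, Matrix.tail_cons, Matrix.head_cons])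
lemma ne02 : (q0 : ConnectedComponents ↥Sset) ≠ q2 :=
  coe_ne (cc0 q0mem) (cc2 q2mem) q2mem
    (by simp only [T0, fQ, q2, mem_setOf_eq]; norm_num [Matrix.cons_val_two, Matrix.tail_cons, Matrix.head_cons])
lemma ne03 : (q0 : ConnectedComponents ↥Sset) ≠ q3 :=
  coe_ne (cc0 q0mem) (cc3 q3mem) q3mem
    (by simp only [T0, fQ, q3, mem_setOf_eq]; norm_num [Matrix.cons_val_two, Matrix.tail_cons, Matrix.head_cons])
lemma ne12 : (q1 : ConnectedComponents ↥Sset) ≠ q2 :=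
  coe_ne (cc1 q1mem) (cc2 q2mem) q2mem
    (by simp only [T1, fQ, q2, mem_setOf_eq]; norm_num [Matrix.cons_val_two, Matrix.tail_cons, Matrix.head_cons])
lemma ne13 : (q1 : ConnectedComponents ↥Sset) ≠ q3 :=
  coe_ne (cc1 q1mem) (cc3 q3mem) q3mem
    (by simp only [T1, fQ, q3, mem_setOf_eq]; norm_num [Matrix.cons_val_two, Matrix.tail_cons, Matrix.head_cons])
lemma ne23 : (q2 : ConnectedComponents ↥Sset) ≠ q3 :=
  coe_ne (cc2 q2mem) (cc3 q3mem) q3mem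
    (by simp only [T2, fQ, q3, mem_setOf_eq]; norm_num [Matrix.cons_val_two, Matrix.tail_cons, Matrix.head_cons])

def Fmap : Fin 4 → ConnectedComponents ↥Sset :=
  ![(q0 : ConnectedComponents ↥Sset), (q1 : ConnectedComponents ↥Sset),
    (q2 : ConnectedComponents ↥Sset), (q3 : ConnectedComponents ↥Sset)]

lemma main : Nat.card (ConnectedComponents ↥Sset) = 4 := by
  have hbij : Function.Bijective Fmap := by
    constructor
    · intro i j hij
      fin_cases i <;> fin_cases j <;>
        simp only [Fmap, Matrix.cons_val_zero, Matrix.cons_val_one, Matrix.head_cons,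
          Matrix.cons_val_two, Matrix.tail_cons, Matrix.cons_val_three,
          Fin.mk_zero, Fin.mk_one] at hij ⊢ <;>
        first
        | rfl
        | exact absurd hij ne01 | exact absurd hij ne01.symm
        | exact absurd hij ne02 | exact absurd hij ne02.symm
        | exact absurd hij ne03 | exact absurd hij ne03.symm
        | exact absurd hij ne12 | exact absurd hij ne12.symm
        | exact absurd hij ne13 | exact absurd hij ne13.symm
        | exact absurd hij ne23 | exact absurd hij ne23.symm
    · intro c
      obtain ⟨x, rfl⟩ := ConnectedComponents.surjective_coe c
      rcases cover x.2 with h | h | h | h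
      · exact ⟨0, by
          show (q0 : ConnectedComponents ↥Sset) = _
          rw [ConnectedComponents.coe_eq_coe, cc0 q0mem, cc0 h]⟩
      · exact ⟨1, by
          show (q1 : ConnectedComponents ↥Sset) = _
          rw [ConnectedComponents.coe_eq_coe, cc1 q1mem, cc1 h]⟩
      · exact ⟨2, by
          show (q2 : ConnectedComponents ↥Sset) = _
          rw [ConnectedComponents.coe_eq_coe, cc2 q2mem, cc2 h]⟩
      · exact ⟨3, by
          show (q3 : ConnectedComponents ↥Sset) = _
          rw [ConnectedComponents.coe_eq_coe, cc3 q3mem, cc3 h]⟩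
  calc Nat.card (ConnectedComponents ↥Sset) = Nat.card (Fin 4) :=
        (Nat.card_eq_of_bijective Fmap hbij).symm
    _ = 4 := by simp

end

end Stmt16Aux

/-- The open subset `S = {b ∈ ℝ³ : b₁² + b₂² − b₃² ∉ {0, 1}}` of `ℝ³`
(identified with `𝔰𝔭**(ℝ²)` via `B = [[b₁, b₂+b₃],[b₂−b₃, −b₁]]`) has exactly
four connected components. -/
theorem stmt16 :
    Nat.card (ConnectedComponents
      {b : Fin 3 → ℝ //
        b 0 ^ 2 + b 1 ^ 2 - b 2 ^ 2 ≠ 0 ∧ b 0 ^ 2 + b 1 ^ 2 - b 2 ^ 2 ≠ 1}) = 4 :=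
  Stmt16Aux.main
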